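/- Let K be a formally real field. Then the following three subsets of K coincide: (i) the intersection of all valuation subrings of K whose residue field is formally real; (ii) the intersection of A(P) over all orderings P of K; (iii) the set {a ∈ K | ∃ n ∈ ℕ, n ≥ 1, n + a ∈ ∑K² and n − a ∈ ∑K²}. (This common subring is the real holomorphy ring H(K).) -/

import Mathlib

/-- An ordering of a (comm) ring `K`: `P + P ⊆ P`, `P·P ⊆ P`, `-1 ∉ P`, `P ∪ (-P) = K`. -/
def IsOrdering {K : Type*} [CommRing K] (P : Set K) : Prop :=
  (∀ x ∈ P, ∀ y ∈ P, x + y ∈ P) ∧ (∀ x ∈ P, ∀ y ∈ P, x * y ∈ P) ∧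
    (-1 : K) ∉ P ∧ ∀ x : K, x ∈ P ∨ -x ∈ P

/-- `sumsOfPowers K n` is the set of finite sums of `n`-th powers of elements of `K`. -/
def sumsOfPowers (K : Type*) [CommRing K] (n : ℕ) : Set K :=
  {a | ∃ (m : ℕ) (f : Fin m → K), a = ∑ i, f i ^ n}

/-- `A(P)`: the convex hull of `ℚ` in `K` with respect to the ordering `P`
(writing `x ≤_P y` for `y - x ∈ P`): `{a | ∃ r ∈ ℚ, -r ≤_P a ≤_P r}`. -/
def ratHull {K : Type*} [Field K] (P : Set K) : Set K :=
  {a | ∃ r : ℚ, a + (r : K) ∈ P ∧ (r : K) - a ∈ P}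

/-- `I(P) = {a | ∀ r ∈ ℚ, r > 0 → -r ≤_P a ≤_P r}`. -/
def ratInfinitesimals {K : Type*} [Field K] (P : Set K) : Set K :=
  {a | ∀ r : ℚ, 0 < r → a + (r : K) ∈ P ∧ (r : K) - a ∈ P}

section SOS

variable {K : Type*} [Field K]

lemma sop_zero : (0:K) ∈ sumsOfPowers K 2 := ⟨0, ![], by simp⟩

lemma sop_sq (x : K) : x ^ 2 ∈ sumsOfPowers K 2 := ⟨1, ![x], by simp⟩

lemma sop_one : (1:K) ∈ sumsOfPowers K 2 := by simpa using sop_sq (1:K)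

lemma sop_add {a b : K} (ha : a ∈ sumsOfPowers K 2) (hb : b ∈ sumsOfPowers K 2) :
    a + b ∈ sumsOfPowers K 2 := by
  obtain ⟨m, f, rfl⟩ := ha
  obtain ⟨m', g, rfl⟩ := hb
  refine ⟨m + m', Fin.append f g, ?_⟩
  rw [Fin.sum_univ_add]
  simp [Fin.append_left, Fin.append_right]

lemma sop_mul {a b : K} (ha : a ∈ sumsOfPowers K 2) (hb : b ∈ sumsOfPowers K 2) :
    a * b ∈ sumsOfPowers K 2 := by
  obtain ⟨m, f, rfl⟩ := ha
  obtain ⟨m', g, rfl⟩ := hb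
  refine ⟨m * m', fun k => f (finProdFinEquiv.symm k).1 * g (finProdFinEquiv.symm k).2, ?_⟩
  rw [Finset.sum_mul_sum]
  exact ((Fintype.sum_prod_type (f := fun p : Fin m × Fin m' => f p.1 ^ 2 * g p.2 ^ 2)).symm.trans
    (Fintype.sum_equiv finProdFinEquiv.symm _ _ (fun k => by simp [mul_pow])).symm)

lemma sop_natCast (n : ℕ) : ((n : K)) ∈ sumsOfPowers K 2 :=
  ⟨n, fun _ => 1, by simp⟩

lemma sop_sum {ι : Type*} (s : Finset ι) (g : ι → K) :
    (∑ i ∈ s, g i ^ 2) ∈ sumsOfPowers K 2 := by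
  classical
  refine Finset.sum_induction _ (· ∈ sumsOfPowers K 2)
    (fun a b ha hb => sop_add ha hb) sop_zero (fun i _ => sop_sq (g i))

end SOS

section Ord

variable {K : Type*} [Field K] {P : Set K}

lemma ord_sq (hP : IsOrdering P) (x : K) : x ^ 2 ∈ P := by
  rcases hP.2.2.2 x with h | h
  · simpa [sq] using hP.2.1 x h x h
  · have := hP.2.1 _ h _ h
    simpa [sq] using this

lemma ord_one (hP : IsOrdering P) : (1 : K) ∈ P := by simpa using ord_sq hP 1

lemma ord_zero (hP : IsOrdering P) : (0 : K) ∈ P := by simpa using ord_sq hP 0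

lemma ord_natCast (hP : IsOrdering P) (n : ℕ) : ((n : K)) ∈ P := by
  induction n with
  | zero => simpa using ord_zero hP
  | succ k ih => push_cast; exact hP.1 _ ih _ (ord_one hP)

lemma ord_sop (hP : IsOrdering P) {a : K} (ha : a ∈ sumsOfPowers K 2) : a ∈ P := by
  obtain ⟨m, f, rfl⟩ := ha
  exact Finset.sum_induction _ (· ∈ P) (fun a b ha hb => hP.1 a ha b hb) (ord_zero hP)
    (fun i _ => ord_sq hP (f i))

/-- In an ordering of a field, `P ∩ (-P)` is trivial. -/
lemma ord_eq_zero (hP : IsOrdering P) {a : K} (h1 : a ∈ P) (h2 : -a ∈ P) : a = 0 := by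
  by_contra h0
  apply hP.2.2.1
  have : a * (-a * (a⁻¹) ^ 2) = -1 := by field_simp
  rw [← this]
  exact hP.2.1 _ h1 _ (hP.2.1 _ h2 _ (ord_sq hP _))

lemma ord_inv (hP : IsOrdering P) {a : K} (h1 : a ∈ P) : a⁻¹ ∈ P := by
  rcases eq_or_ne a 0 with rfl | h0
  · simpa using ord_zero hP
  · have : a * (a⁻¹) ^ 2 = a⁻¹ := by field_simp [sq]
    rw [← this]; exact hP.2.1 _ h1 _ (ord_sq hP _)

lemma ord_ratCast [CharZero K] (hP : IsOrdering P) {q : ℚ} (hq : 0 < q) : ((q : K)) ∈ P := by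
  have hd : ((q.den : K)) ≠ 0 := Nat.cast_ne_zero.2 q.den_nz
  have hnum : ((q.num.toNat : K)) ∈ P := ord_natCast hP _
  have hq' : (q : K) = (q.num.toNat : K) * (q.den : K) * ((q.den : K)⁻¹) ^ 2 := by
    have h1 : ((q.num.toNat : ℤ) : K) = (q.num.toNat : K) := by push_cast; ring
    have h2 : (q.num.toNat : ℤ) = q.num := Int.toNat_of_nonneg (Rat.num_nonneg.2 hq.le)
    rw [← h1, h2, Rat.cast_def]
    field_simp [sq]
  rw [hq']
  exact hP.2.1 _ (hP.2.1 _ hnum _ (ord_natCast hP _)) _ (ord_sq hP _)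

end Ord

section Pre

variable {K : Type*} [Field K]

/-- A (proper) preordering of a field. -/
def IsPre (T : Set K) : Prop :=
  (∀ x ∈ T, ∀ y ∈ T, x + y ∈ T) ∧ (∀ x ∈ T, ∀ y ∈ T, x * y ∈ T) ∧
    (∀ x : K, x ^ 2 ∈ T) ∧ (-1 : K) ∉ T

lemma IsPre.zero_mem {T : Set K} (hT : IsPre T) : (0:K) ∈ T := by simpa using hT.2.2.1 0
lemma IsPre.one_mem {T : Set K} (hT : IsPre T) : (1:K) ∈ T := by simpa using hT.2.2.1 1

/-- A maximal proper preordering is an ordering. -/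
lemma exists_ordering_superset {T : Set K} (hT : IsPre T) :
    ∃ P : Set K, IsOrdering P ∧ T ⊆ P := by
  have zorn : ∀ c ⊆ {U : Set K | IsPre U}, IsChain (· ⊆ ·) c → c.Nonempty →
      ∃ ub ∈ {U : Set K | IsPre U}, ∀ s ∈ c, s ⊆ ub := by
    intro c hc hchain hne
    refine ⟨⋃₀ c, ⟨?_, ?_, ?_, ?_⟩, fun s hs => Set.subset_sUnion_of_mem hs⟩
    · rintro x ⟨U, hU, hxU⟩ y ⟨V, hV, hyV⟩
      rcases hchain.total hU hV with h | h
      · exact ⟨V, hV, (hc hV).1 x (h hxU) y hyV⟩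
      · exact ⟨U, hU, (hc hU).1 x hxU y (h hyV)⟩
    · rintro x ⟨U, hU, hxU⟩ y ⟨V, hV, hyV⟩
      rcases hchain.total hU hV with h | h
      · exact ⟨V, hV, (hc hV).2.1 x (h hxU) y hyV⟩
      · exact ⟨U, hU, (hc hU).2.1 x hxU y (h hyV)⟩
    · intro x
      obtain ⟨U, hU⟩ := hne
      exact ⟨U, hU, (hc hU).2.2.1 x⟩
    · rintro ⟨U, hU, hx⟩
      exact (hc hU).2.2.2 hx
  obtain ⟨M, hTM, hM⟩ := zorn_subset_nonempty {U : Set K | IsPre U} zorn T hT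
  have hMpre : IsPre M := hM.1
  -- key: if x ∉ M then -1 = p + x * q for some p q ∈ M
  have key : ∀ x : K, x ∉ M → ∃ p ∈ M, ∃ q ∈ M, (-1 : K) = p + x * q := by
    intro x hx
    by_contra hcon
    push_neg at hcon
    set M' : Set K := {z | ∃ p ∈ M, ∃ q ∈ M, z = p + x * q} with hM'
    have hsub : M ⊆ M' := fun p hp => ⟨p, hp, 0, hMpre.zero_mem, by ring⟩
    have hpre : IsPre M' := by
      refine ⟨?_, ?_, fun z => hsub (hMpre.2.2.1 z), ?_⟩
      · rintro _ ⟨p1, hp1, q1, hq1, rfl⟩ _ ⟨p2, hp2, q2, hq2, rfl⟩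
        exact ⟨p1 + p2, hMpre.1 _ hp1 _ hp2, q1 + q2, hMpre.1 _ hq1 _ hq2, by ring⟩
      · rintro _ ⟨p1, hp1, q1, hq1, rfl⟩ _ ⟨p2, hp2, q2, hq2, rfl⟩
        refine ⟨p1 * p2 + x ^ 2 * (q1 * q2),
          hMpre.1 _ (hMpre.2.1 _ hp1 _ hp2) _
            (hMpre.2.1 _ (hMpre.2.2.1 x) _ (hMpre.2.1 _ hq1 _ hq2)),
          p1 * q2 + q1 * p2,
          hMpre.1 _ (hMpre.2.1 _ hp1 _ hq2) _ (hMpre.2.1 _ hq1 _ hp2), by ring⟩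
      · rintro ⟨p, hp, q, hq, h⟩
        exact hcon p hp q hq h
    exact hx (hM.2 hpre hsub ⟨0, hMpre.zero_mem, 1, hMpre.one_mem, by ring⟩)
  refine ⟨M, ⟨hMpre.1, hMpre.2.1, hMpre.2.2.2, ?_⟩, hTM⟩
  intro x
  by_contra hcon
  push_neg at hcon
  obtain ⟨hx, hnx⟩ := hcon
  obtain ⟨p1, hp1, q1, hq1, h1⟩ := key x hx
  obtain ⟨p2, hp2, q2, hq2, h2⟩ := key (-x) hnx
  set z := (1 + p1) * (1 + p2) with hz
  have hzM : z ∈ M := hMpre.2.1 _ (hMpre.1 _ hMpre.one_mem _ hp1) _ (hMpre.1 _ hMpre.one_mem _ hp2)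
  have hnzM : -z ∈ M := by
    have hxq1 : x * q1 = -(1 + p1) := by linear_combination -h1
    have hxq2 : x * q2 = 1 + p2 := by linear_combination h2
    have : -z = x ^ 2 * (q1 * q2) := by
      rw [hz]; linear_combination (-(x * q2)) * hxq1 + (1 + p1) * hxq2
    rw [this]
    exact hMpre.2.1 _ (hMpre.2.2.1 x) _ (hMpre.2.1 _ hq1 _ hq2)
  have hz0 : z ≠ 0 := by
    intro h
    rcases mul_eq_zero.1 (hz ▸ h) with h' | h'
    · exact hMpre.2.2.2 (by rw [show (-1:K) = p1 by linear_combination -h']; exact hp1)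
    · exact hMpre.2.2.2 (by rw [show (-1:K) = p2 by linear_combination -h']; exact hp2)
  apply hMpre.2.2.2
  have : (-1 : K) = z * (-z) * (z⁻¹) ^ 2 := by field_simp
  rw [this]
  exact hMpre.2.1 _ (hMpre.2.1 _ hzM _ hnzM) _ (hMpre.2.2.1 _)

/-- Artin: an element not a sum of squares is negative at some ordering. -/
lemma exists_ordering_not_mem (hreal : (-1 : K) ∉ sumsOfPowers K 2) {t : K}
    (ht : t ∉ sumsOfPowers K 2) : ∃ P : Set K, IsOrdering P ∧ t ∉ P := by
  have h0 : t ≠ 0 := fun h => ht (h ▸ sop_zero)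
  set T : Set K := {z | ∃ p ∈ sumsOfPowers K 2, ∃ q ∈ sumsOfPowers K 2, z = p - t * q} with hT
  have hpre : IsPre T := by
    refine ⟨?_, ?_, fun z => ⟨z ^ 2, sop_sq z, 0, sop_zero, by ring⟩, ?_⟩
    · rintro _ ⟨p1, hp1, q1, hq1, rfl⟩ _ ⟨p2, hp2, q2, hq2, rfl⟩
      exact ⟨p1 + p2, sop_add hp1 hp2, q1 + q2, sop_add hq1 hq2, by ring⟩
    · rintro _ ⟨p1, hp1, q1, hq1, rfl⟩ _ ⟨p2, hp2, q2, hq2, rfl⟩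
      exact ⟨p1 * p2 + t ^ 2 * (q1 * q2),
        sop_add (sop_mul hp1 hp2) (sop_mul (sop_sq t) (sop_mul hq1 hq2)),
        p1 * q2 + q1 * p2, sop_add (sop_mul hp1 hq2) (sop_mul hq1 hp2), by ring⟩
    · rintro ⟨p, hp, q, hq, h⟩
      rcases eq_or_ne q 0 with rfl | hq0
      · exact hreal (by rw [show (-1:K) = p by linear_combination h]; exact hp)
      · apply ht
        have htq : t * q = 1 + p := by linear_combination h
        have : t = (t * q) * q * (q⁻¹) ^ 2 := by field_simp
        rw [this, htq]
        exact sop_mul (sop_mul (sop_add sop_one hp) hq) (sop_sq _)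
  obtain ⟨P, hP, hTP⟩ := exists_ordering_superset hpre
  refine ⟨P, hP, fun htP => ?_⟩
  have hnt : -t ∈ P := hTP ⟨0, sop_zero, 1, sop_one, by ring⟩
  exact h0 (ord_eq_zero hP htP hnt)

/-- Artin's theorem: totally positive elements are sums of squares. -/
lemma mem_sop_of_forall_ordering (hreal : (-1 : K) ∉ sumsOfPowers K 2) {t : K}
    (h : ∀ P : Set K, IsOrdering P → t ∈ P) : t ∈ sumsOfPowers K 2 := by
  by_contra ht
  obtain ⟨P, hP, htP⟩ := exists_ordering_not_mem hreal ht
  exact htP (h P hP)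

end Pre

section OrdValuation

variable {K : Type*} [Field K] [CharZero K] {P : Set K}

lemma ratHull_neg (hP : IsOrdering P) {a : K} (ha : a ∈ ratHull P) : -a ∈ ratHull P := by
  obtain ⟨r, h1, h2⟩ := ha
  exact ⟨r, by simpa [sub_eq_add_neg, add_comm] using h2, by
    simpa [sub_neg_eq_add, add_comm] using h1⟩

lemma ratHull_inv_of_mem (hP : IsOrdering P) {x : K} (hx : x ∈ P) (hx1 : x - 1 ∈ P) :
    x⁻¹ ∈ ratHull P := by
  have hx0 : x ≠ 0 := by
    rintro rfl
    exact hP.2.2.1 (by simpa using (show (0:K) - 1 ∈ P from hx1))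
  have hinv : x⁻¹ ∈ P := ord_inv hP hx
  refine ⟨1, ?_, ?_⟩
  · push_cast
    exact hP.1 _ hinv _ (ord_one hP)
  · push_cast
    have : (1 : K) - x⁻¹ = (x - 1) * x * (x⁻¹) ^ 2 := by field_simp
    rw [this]
    exact hP.2.1 _ (hP.2.1 _ hx1 _ hx) _ (ord_sq hP _)

/-- The valuation ring `A(P)` attached to an ordering `P`. -/
def ordValuationSubring (hP : IsOrdering P) : ValuationSubring K where
  carrier := ratHull P
  zero_mem' := ⟨0, by simpa using ord_zero hP, by simpa using ord_zero hP⟩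
  one_mem' := ⟨1, by push_cast; simpa using hP.1 _ (ord_one hP) _ (ord_one hP), by
    push_cast; simpa using ord_zero hP⟩
  add_mem' := by
    rintro a b ⟨r, h1, h2⟩ ⟨s, h3, h4⟩
    refine ⟨r + s, ?_, ?_⟩
    · push_cast
      have : a + b + ((r : K) + (s : K)) = (a + r) + (b + s) := by ring
      rw [this]; exact hP.1 _ h1 _ h3
    · push_cast
      have : (r : K) + (s : K) - (a + b) = ((r : K) - a) + ((s : K) - b) := by ring
      rw [this]; exact hP.1 _ h2 _ h4
  neg_mem' := fun h => ratHull_neg hP h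
  mul_mem' := by
    rintro a b ⟨r, h1, h2⟩ ⟨s, h3, h4⟩
    have h2ne : (2 : K) ≠ 0 := by
      intro h
      apply hP.2.2.1
      have : (-1 : K) = 1 := by linear_combination -h
      rw [this]; exact ord_one hP
    have hhalf : (2 : K)⁻¹ ∈ P := by
      have : (2:K)⁻¹ = (1 + 1) * ((2:K)⁻¹) ^ 2 := by field_simp; ring
      rw [this]; exact hP.2.1 _ (hP.1 _ (ord_one hP) _ (ord_one hP)) _ (ord_sq hP _)
    refine ⟨r * s, ?_, ?_⟩
    · push_cast
      have : a * b + (r : K) * (s : K) =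
          (((r : K) + a) * ((s : K) + b) + ((r : K) - a) * ((s : K) - b)) * (2 : K)⁻¹ := by
        field_simp; ring
      rw [this]
      exact hP.2.1 _ (hP.1 _ (hP.2.1 _ (by rwa [add_comm] at h1) _ (by rwa [add_comm] at h3)) _
        (hP.2.1 _ h2 _ h4)) _ hhalf
    · push_cast
      have : (r : K) * (s : K) - a * b =
          (((r : K) - a) * ((s : K) + b) + ((r : K) + a) * ((s : K) - b)) * (2 : K)⁻¹ := by
        field_simp; ring
      rw [this]
      exact hP.2.1 _ (hP.1 _ (hP.2.1 _ h2 _ (by rwa [add_comm] at h3)) _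
        (hP.2.1 _ (by rwa [add_comm] at h1) _ h4)) _ hhalf
  mem_or_inv_mem' := by
    intro x
    have main : ∀ y : K, y ∈ P → y ∈ ratHull P ∨ y⁻¹ ∈ ratHull P := by
      intro y hy
      rcases hP.2.2.2 (1 - y) with h | h
      · left
        exact ⟨1, by push_cast; exact hP.1 _ hy _ (ord_one hP), by push_cast; exact h⟩
      · right
        exact ratHull_inv_of_mem hP hy (by rwa [neg_sub] at h)
    rcases hP.2.2.2 x with h | h
    · exact main x h
    · rcases main (-x) h with h' | h'
      · left; simpa using ratHull_neg hP h'
      · right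
        have hxx : x⁻¹ = -(-x)⁻¹ := by rw [inv_neg, neg_neg]
        rw [hxx]; exact ratHull_neg hP h'

lemma coe_ordValuationSubring (hP : IsOrdering P) :
    (ordValuationSubring hP : Set K) = ratHull P := rfl

/-- The residue field of `A(P)` is formally real. -/
lemma ordValuationSubring_residue_real (hP : IsOrdering P) :
    (-1 : IsLocalRing.ResidueField (ordValuationSubring hP)) ∉
      sumsOfPowers (IsLocalRing.ResidueField (ordValuationSubring hP)) 2 := by
  set A := ordValuationSubring hP with hA
  rintro ⟨m, f, hf⟩
  -- lift each f i to A
  have hsurj := IsLocalRing.residue_surjective (R := A)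
  choose g hg using fun i => hsurj (f i)
  set x : A := 1 + ∑ i, g i ^ 2 with hx
  have hres : IsLocalRing.residue A x = 0 := by
    rw [hx]
    rw [map_add, map_sum]
    simp only [map_pow, hg, map_one]
    rw [← hf]
    ring
  have hxm : x ∈ IsLocalRing.maximalIdeal A := (IsLocalRing.residue_eq_zero_iff _).1 hres
  -- but x is a unit in A
  have hsumP : (∑ i, ((g i : K)) ^ 2) ∈ P :=
    Finset.sum_induction _ (· ∈ P) (fun a b ha hb => hP.1 a ha b hb) (ord_zero hP)
      (fun i _ => ord_sq hP _)
  have hxK : ((x : K)) = 1 + ∑ i, ((g i : K)) ^ 2 := by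
    rw [hx]
    push_cast
    rfl
  have hxP : ((x : K)) ∈ P := by rw [hxK]; exact hP.1 _ (ord_one hP) _ hsumP
  have hx1P : ((x : K)) - 1 ∈ P := by rw [hxK]; simpa using hsumP
  have hx0 : ((x : K)) ≠ 0 := by
    intro h
    apply hP.2.2.1
    have : (-1 : K) = ∑ i, ((g i : K)) ^ 2 := by rw [hxK] at h; linear_combination -h
    rw [this]; exact hsumP
  have hinv : ((x : K))⁻¹ ∈ ratHull P := ratHull_inv_of_mem hP hxP hx1P
  have : IsUnit x := by
    refine ⟨⟨x, ⟨(x : K)⁻¹, hinv⟩, ?_, ?_⟩, rfl⟩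
    · exact Subtype.ext (by simp [mul_inv_cancel₀ hx0])
    · exact Subtype.ext (by simp [inv_mul_cancel₀ hx0])
  exact IsLocalRing.notMem_maximalIdeal.2 this hxm

end OrdValuation

section ValMem

variable {K : Type*} [Field K]

/-- If a unit of a valuation ring with formally real residue field is a sum of squares
of elements of `K`, all those elements lie in the valuation ring. -/
lemma sos_unit_mem (A : ValuationSubring K)
    (hA : (-1 : IsLocalRing.ResidueField A) ∉ sumsOfPowers (IsLocalRing.ResidueField A) 2)
    {m : ℕ} (y : Fin m → K) (u : A) (hu : IsUnit u) (h : (u : K) = ∑ i, y i ^ 2) :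
    ∀ i, y i ∈ A := by
  rcases Nat.eq_zero_or_pos m with rfl | hm
  · exact fun i => absurd i.2 (by simp)
  obtain ⟨j, -, hj⟩ := Finset.exists_max_image Finset.univ (fun i => A.valuation (y i))
    (Finset.univ_nonempty_iff.2 ⟨⟨0, hm⟩⟩)
  have hyj : y j ≠ 0 := by
    intro h0
    have hall : ∀ i, y i = 0 := by
      intro i
      have := hj i (Finset.mem_univ i)
      rw [h0, map_zero, le_zero_iff, Valuation.zero_iff] at this
      exact this
    have : (u : K) = 0 := by rw [h]; simp [hall]
    exact hu.ne_zero (Subtype.ext (by simpa using this))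
  have hdiv : ∀ i, y i / y j ∈ A := by
    intro i
    rw [← ValuationSubring.valuation_le_one_iff, map_div₀]
    rw [div_le_one₀]
    · exact hj i (Finset.mem_univ i)
    · rw [zero_lt_iff]
      exact (Valuation.ne_zero_iff _).2 hyj
  set Y : Fin m → A := fun i => ⟨y i / y j, hdiv i⟩ with hY
  set t : A := ∑ i, Y i ^ 2 with ht
  -- residue of t is nonzero
  have htres : IsLocalRing.residue A t ≠ 0 := by
    intro h0
    apply hA
    rw [ht, map_sum] at h0
    have hYj : IsLocalRing.residue A (Y j ^ 2) = 1 := by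
      have : Y j = 1 := Subtype.ext (by simp [hY, div_self hyj])
      rw [this]; simp
    classical
    rw [← Finset.add_sum_erase _ _ (Finset.mem_univ j), hYj] at h0
    have hneg : (-1 : IsLocalRing.ResidueField A) =
        ∑ i ∈ Finset.univ.erase j, (IsLocalRing.residue A (Y i)) ^ 2 := by
      have := h0
      simp only [map_pow] at this ⊢
      linear_combination -this
    rw [hneg]
    exact sop_sum _ _
  have htu : IsUnit t := IsLocalRing.notMem_maximalIdeal.1
    (fun htm => htres ((IsLocalRing.residue_eq_zero_iff _).2 htm))
  -- (u:K) = y j ^ 2 * (t:K)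
  have htK : ((t : K)) = ∑ i, (y i / y j) ^ 2 := by
    rw [ht]; push_cast; rfl
  have huyt : ((u : K)) = y j ^ 2 * (t : K) := by
    rw [htK, h, Finset.mul_sum]
    congr 1
    ext i
    field_simp
  -- y j ^ 2 ∈ A as a unit
  obtain ⟨tinv, htinv⟩ := htu.exists_right_inv
  have hyj2 : y j ^ 2 = ((u * tinv : A) : K) := by
    have h1 : ((t : K)) ≠ 0 := by
      intro h0
      rw [h0, mul_zero] at huyt
      exact hu.ne_zero (Subtype.ext (by simpa using huyt))
    have h2 : ((tinv : K)) = ((t : K))⁻¹ := by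
      have : ((t : K)) * ((tinv : K)) = 1 := by
        have := congrArg (fun z : A => (z : K)) htinv
        push_cast at this
        exact this
      field_simp at this ⊢
      linear_combination this
    push_cast
    rw [h2, huyt]
    field_simp
  have hyjA : y j ∈ A := by
    rcases A.mem_or_inv_mem (y j) with h' | h'
    · exact h'
    · have : y j = y j ^ 2 * (y j)⁻¹ := by field_simp
      rw [this, hyj2]
      exact Subring.mul_mem _ (u * tinv).2 h'
  intro i
  have : y i = (y i / y j) * y j := by field_simp
  rw [this]
  exact Subring.mul_mem _ (hdiv i) hyjA

end ValMem

section Main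

variable {K : Type*} [Field K]

lemma charZero_of_real (hreal : (-1 : K) ∉ sumsOfPowers K 2) : CharZero K := by
  rcases CharP.char_is_prime_or_zero K (ringChar K) with hp | hp
  · exfalso
    apply hreal
    have hcast : ((ringChar K : ℕ) : K) = 0 := ringChar.spec K (ringChar K) |>.2 dvd_rfl
    have h1 : 1 ≤ ringChar K := hp.one_lt.le
    have : (-1 : K) = ((ringChar K - 1 : ℕ) : K) := by
      rw [Nat.cast_sub h1, hcast]
      simp
    rw [this]
    exact sop_natCast _
  · haveI : CharP K 0 := hp ▸ ringChar.charP K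
    exact CharP.charP_to_charZero K

/-- Elements of the "sum of squares" description lie in every valuation ring with
formally real residue field. -/
lemma hset_subset_val (A : ValuationSubring K)
    (hA : (-1 : IsLocalRing.ResidueField A) ∉ sumsOfPowers (IsLocalRing.ResidueField A) 2)
    {a : K} {n : ℕ} (hp : (n : K) + a ∈ sumsOfPowers K 2)
    (hm : (n : K) - a ∈ sumsOfPowers K 2) : a ∈ A := by
  by_contra ha
  have ha0 : a ≠ 0 := fun h => ha (h ▸ A.zero_mem)
  have hainv : a⁻¹ ∈ A := (A.mem_or_inv_mem a).resolve_left ha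
  set b : A := ⟨a⁻¹, hainv⟩ with hb
  have hbnu : b ∈ IsLocalRing.maximalIdeal A := by
    rw [IsLocalRing.mem_maximalIdeal, mem_nonunits_iff]
    intro hu
    obtain ⟨c, hc⟩ := hu.exists_right_inv
    apply ha
    have : (c : K) = a := by
      have := congrArg (fun z : A => (z : K)) hc
      push_cast at this
      have hb' : (b : K) = a⁻¹ := rfl
      rw [hb'] at this
      field_simp at this
      linear_combination this
    rw [← this]; exact c.2
  set c : A := (n : A) * b with hc
  have hcm : c ∈ IsLocalRing.maximalIdeal A := Ideal.mul_mem_left _ _ hbnu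
  set u : A := c ^ 2 - 1 with hu
  have hures : IsLocalRing.residue A u = -1 := by
    rw [hu, map_sub, map_pow, (IsLocalRing.residue_eq_zero_iff _).2 hcm]
    simp
  have hne : (-1 : IsLocalRing.ResidueField A) ≠ 0 := by
    intro h
    exact hA (by rw [h]; exact sop_zero)
  have huunit : IsUnit u := IsLocalRing.notMem_maximalIdeal.1
    (fun hum => hne (hures ▸ (IsLocalRing.residue_eq_zero_iff _).2 hum))
  obtain ⟨m, f, hf⟩ := sop_mul hp hm
  have huK : ((u : K)) = ∑ i, (f i * a⁻¹) ^ 2 := by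
    have hcK : ((c : K)) = (n : K) * a⁻¹ := by rw [hc]; push_cast; rfl
    have h1 : ((u : K)) = ((n : K) * a⁻¹) ^ 2 - 1 := by
      rw [hu]; push_cast; rw [hcK]
    rw [h1]
    have h2 : ((n : K) + a) * ((n : K) - a) = ∑ i, f i ^ 2 := hf
    have : ∀ i, (f i * a⁻¹) ^ 2 = f i ^ 2 * (a⁻¹) ^ 2 := fun i => by ring
    simp_rw [this]
    rw [← Finset.sum_mul, ← h2]
    field_simp
    ring
  have hmem : ∀ i, f i * a⁻¹ ∈ A := sos_unit_mem A hA _ u huunit huK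
  set Y : Fin m → A := fun i => ⟨f i * a⁻¹, hmem i⟩ with hY
  have huY : u = ∑ i, Y i ^ 2 := by
    apply Subtype.ext
    push_cast
    rw [huK]
  apply hA
  have : (-1 : IsLocalRing.ResidueField A) = ∑ i, (IsLocalRing.residue A (Y i)) ^ 2 := by
    rw [← hures, huY, map_sum]
    simp
  rw [this]
  exact sop_sum _ _

end Main

section OH

variable {K : Type*} [Field K]

/-- If `n² - a² ∈ P` then `n + a ∈ P` (and by symmetry `n - a ∈ P`). -/
lemma ord_add_of_sq_sub_sq [CharZero K] {P : Set K} (hP : IsOrdering P) {a : K} {n : ℕ}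
    (hn : 1 ≤ n) (h : (n : K) ^ 2 - a ^ 2 ∈ P) : (n : K) + a ∈ P := by
  rcases eq_or_ne ((n : K) + a) 0 with h0 | h0
  · rw [h0]; exact ord_zero hP
  rcases hP.2.2.2 ((n : K) + a) with hz | hz
  · exact hz
  exfalso
  have hw : -((n : K) - a) ∈ P := by
    have heq : -((n : K) - a) = (-((n : K) + a)) * (((n : K) ^ 2 - a ^ 2)) *
        ((((n : K) + a)⁻¹) ^ 2) := by
      field_simp
      ring
    rw [heq]
    exact hP.2.1 _ (hP.2.1 _ hz _ h) _ (ord_sq hP _)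
  have h2n : -(2 * (n : K)) ∈ P := by
    have heq : -(2 * (n : K)) = -((n : K) + a) + -((n : K) - a) := by ring
    rw [heq]; exact hP.1 _ hz _ hw
  have h2n' : (2 * (n : K)) ∈ P := by
    have heq : (2 * (n : K)) = ((2 * n : ℕ) : K) := by push_cast; ring
    rw [heq]; exact ord_natCast hP _
  have hzero := ord_eq_zero hP h2n' h2n
  have hn0 : (2 * (n : K)) ≠ 0 := by
    have h2 : ((2 * n : ℕ) : K) ≠ 0 := Nat.cast_ne_zero.2 (by omega)
    push_cast at h2
    exact h2
  exact hn0 hzero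

end OH

section OH2

variable {K : Type*} [Field K]

lemma ratHull_all_subset_hset (hreal : (-1 : K) ∉ sumsOfPowers K 2) {a : K}
    (h : ∀ P : Set K, IsOrdering P → a ∈ ratHull P) :
    ∃ n : ℕ, 1 ≤ n ∧ (n : K) + a ∈ sumsOfPowers K 2 ∧ (n : K) - a ∈ sumsOfPowers K 2 := by
  haveI : CharZero K := charZero_of_real hreal
  -- Step 1: some n with n² - a² a sum of squares
  have step1 : ∃ n : ℕ, 1 ≤ n ∧ (n : K) ^ 2 - a ^ 2 ∈ sumsOfPowers K 2 := by
    by_contra hcon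
    push_neg at hcon
    set T : Set K := {z | ∃ n : ℕ, 1 ≤ n ∧ ∃ p ∈ sumsOfPowers K 2, ∃ q ∈ sumsOfPowers K 2,
      z = p + (a ^ 2 - (n : K) ^ 2) * q} with hT
    have mono : ∀ (n m : ℕ), n ≤ m → ∀ p ∈ sumsOfPowers K 2, ∀ q ∈ sumsOfPowers K 2,
        ∃ p' ∈ sumsOfPowers K 2, ∃ q' ∈ sumsOfPowers K 2,
          p + (a ^ 2 - (n : K) ^ 2) * q = p' + (a ^ 2 - (m : K) ^ 2) * q' := by
      intro n m hnm p hp q hq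
      refine ⟨p + ((m ^ 2 - n ^ 2 : ℕ) : K) * q, sop_add hp (sop_mul (sop_natCast _) hq),
        q, hq, ?_⟩
      have hc : ((m ^ 2 - n ^ 2 : ℕ) : K) = (m : K) ^ 2 - (n : K) ^ 2 := by
        rw [Nat.cast_sub (Nat.pow_le_pow_left hnm 2)]
        push_cast; ring
      rw [hc]; ring
    have hpre : IsPre T := by
      refine ⟨?_, ?_, ?_, ?_⟩
      · rintro z ⟨n1, hn1, p1, hp1, q1, hq1, rfl⟩ w ⟨n2, hn2, p2, hp2, q2, hq2, rfl⟩
        obtain ⟨p1', hp1', q1', hq1', he1⟩ := mono n1 (max n1 n2) (le_max_left _ _) p1 hp1 q1 hq1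
        obtain ⟨p2', hp2', q2', hq2', he2⟩ := mono n2 (max n1 n2) (le_max_right _ _) p2 hp2 q2 hq2
        exact ⟨max n1 n2, le_trans hn1 (le_max_left _ _), p1' + p2', sop_add hp1' hp2',
          q1' + q2', sop_add hq1' hq2', by rw [he1, he2]; ring⟩
      · rintro z ⟨n1, hn1, p1, hp1, q1, hq1, rfl⟩ w ⟨n2, hn2, p2, hp2, q2, hq2, rfl⟩
        obtain ⟨p1', hp1', q1', hq1', he1⟩ := mono n1 (max n1 n2) (le_max_left _ _) p1 hp1 q1 hq1
        obtain ⟨p2', hp2', q2', hq2', he2⟩ := mono n2 (max n1 n2) (le_max_right _ _) p2 hp2 q2 hq2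
        refine ⟨max n1 n2, le_trans hn1 (le_max_left _ _),
          p1' * p2' + (a ^ 2 - ((max n1 n2 : ℕ) : K) ^ 2) ^ 2 * (q1' * q2'),
          sop_add (sop_mul hp1' hp2') (sop_mul (sop_sq _) (sop_mul hq1' hq2')),
          p1' * q2' + q1' * p2', sop_add (sop_mul hp1' hq2') (sop_mul hq1' hp2'), ?_⟩
        rw [he1, he2]; ring
      · exact fun x => ⟨1, le_refl 1, x ^ 2, sop_sq x, 0, sop_zero, by ring⟩
      · rintro ⟨n, hn, p, hp, q, hq, he⟩
        rcases eq_or_ne q 0 with rfl | hq0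
        · exact hreal (by rw [show (-1 : K) = p by linear_combination he]; exact hp)
        · apply hcon n hn
          have htq : ((n : K) ^ 2 - a ^ 2) * q = 1 + p := by linear_combination he
          have heq : (n : K) ^ 2 - a ^ 2 = (((n : K) ^ 2 - a ^ 2) * q) * q * (q⁻¹) ^ 2 := by
            field_simp
          rw [heq, htq]
          exact sop_mul (sop_mul (sop_add sop_one hp) hq) (sop_sq _)
    obtain ⟨P, hP, hTP⟩ := exists_ordering_superset hpre
    obtain ⟨r, h1, h2⟩ := h P hP
    have hr2 : (r : K) ^ 2 - a ^ 2 ∈ P := by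
      have heq : (r : K) ^ 2 - a ^ 2 = (a + (r : K)) * ((r : K) - a) := by ring
      rw [heq]; exact hP.2.1 _ h1 _ h2
    obtain ⟨n0, hn0⟩ := exists_nat_gt (r ^ 2)
    set n : ℕ := n0 + 1 with hn
    have hrn : r ^ 2 < (n : ℚ) ^ 2 := by
      have hc : (n : ℚ) = (n0 : ℚ) + 1 := by rw [hn]; push_cast; ring
      have h0 : (0 : ℚ) ≤ (n0 : ℚ) := Nat.cast_nonneg n0
      rw [hc]; nlinarith [hn0]
    have hd : a ^ 2 - (n : K) ^ 2 ∈ P := hTP ⟨n, by omega, 0, sop_zero, 1, sop_one, by ring⟩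
    set qq : ℚ := (n : ℚ) ^ 2 - r ^ 2 with hqq
    have hqpos : 0 < qq := by rw [hqq]; linarith
    have hqP : ((qq : ℚ) : K) ∈ P := ord_ratCast hP hqpos
    have hnqP : -((qq : ℚ) : K) ∈ P := by
      have heq : -((qq : ℚ) : K) = (a ^ 2 - (n : K) ^ 2) + ((r : K) ^ 2 - a ^ 2) := by
        rw [hqq]; push_cast; ring
      rw [heq]; exact hP.1 _ hd _ hr2
    have := ord_eq_zero hP hqP hnqP
    exact (Rat.cast_ne_zero.2 hqpos.ne') this
  obtain ⟨n, hn, hsq⟩ := step1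
  refine ⟨n, hn, ?_, ?_⟩
  · exact mem_sop_of_forall_ordering hreal
      (fun P hP => ord_add_of_sq_sub_sq hP hn (ord_sop hP hsq))
  · have := mem_sop_of_forall_ordering hreal (fun P hP => ord_add_of_sq_sub_sq hP hn
      (show (n : K) ^ 2 - (-a) ^ 2 ∈ P from by
        rw [neg_pow]; simpa using ord_sop hP hsq))
    rwa [← sub_eq_add_neg] at this

end OH2

/-- The real holomorphy ring: for a formally real field `K`, the intersection of all valuation
subrings of `K` with formally real residue field equals the intersection of the rings `A(P)`
over all orderings `P`, and equals `{a | ∃ n ≥ 1, n + a ∈ ∑K² ∧ n - a ∈ ∑K²}`. -/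
theorem stmt17 {K : Type*} [Field K] (hreal : (-1 : K) ∉ sumsOfPowers K 2) :
    (⋂ A ∈ {A : ValuationSubring K |
        (-1 : IsLocalRing.ResidueField A) ∉ sumsOfPowers (IsLocalRing.ResidueField A) 2},
      (A : Set K)) = (⋂ P ∈ {P : Set K | IsOrdering P}, ratHull P) ∧
    (⋂ A ∈ {A : ValuationSubring K |
        (-1 : IsLocalRing.ResidueField A) ∉ sumsOfPowers (IsLocalRing.ResidueField A) 2},
      (A : Set K)) =
      {a : K | ∃ n : ℕ, 1 ≤ n ∧ (n : K) + a ∈ sumsOfPowers K 2 ∧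
        (n : K) - a ∈ sumsOfPowers K 2} := by
  haveI : CharZero K := charZero_of_real hreal
  have hVO : (⋂ A ∈ {A : ValuationSubring K |
        (-1 : IsLocalRing.ResidueField A) ∉ sumsOfPowers (IsLocalRing.ResidueField A) 2},
      (A : Set K)) ⊆ (⋂ P ∈ {P : Set K | IsOrdering P}, ratHull P) := by
    intro a ha
    rw [Set.mem_iInter₂] at ha ⊢
    intro P hP
    exact ha (ordValuationSubring hP) (ordValuationSubring_residue_real hP)
  have hOH : (⋂ P ∈ {P : Set K | IsOrdering P}, ratHull P) ⊆
      {a : K | ∃ n : ℕ, 1 ≤ n ∧ (n : K) + a ∈ sumsOfPowers K 2 ∧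
        (n : K) - a ∈ sumsOfPowers K 2} := by
    intro a ha
    rw [Set.mem_iInter₂] at ha
    exact ratHull_all_subset_hset hreal (fun P hP => ha P hP)
  have hHV : {a : K | ∃ n : ℕ, 1 ≤ n ∧ (n : K) + a ∈ sumsOfPowers K 2 ∧
        (n : K) - a ∈ sumsOfPowers K 2} ⊆ (⋂ A ∈ {A : ValuationSubring K |
        (-1 : IsLocalRing.ResidueField A) ∉ sumsOfPowers (IsLocalRing.ResidueField A) 2},
      (A : Set K)) := by
    rintro a ⟨n, hn, hp, hm⟩
    rw [Set.mem_iInter₂]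
    intro A hA
    exact hset_subset_val A hA hp hm
  exact ⟨Set.Subset.antisymm hVO (fun x hx => hHV (hOH hx)),
    Set.Subset.antisymm (fun x hx => hOH (hVO hx)) hHV⟩
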